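/- Every nondegenerate D-continuum is decomposable, i.e. it can be written as the union of two proper subcontinua. -/

import Mathlib

/-- A topological space is a *D-space* if for every pair of disjoint nondegenerate
subcontinua `A, B` there is a subcontinuum `C` meeting both `A` and `B` with
`(A ∪ B) \ C ≠ ∅`. -/
def DSpace (X : Type*) [TopologicalSpace X] : Prop :=
  ∀ A B : Set X, IsCompact A → IsConnected A → A.Nontrivial →
    IsCompact B → IsConnected B → B.Nontrivial → Disjoint A B →
    ∃ C : Set X, IsCompact C ∧ IsConnected C ∧
      (A ∩ C).Nonempty ∧ (B ∩ C).Nonempty ∧ ((A ∪ B) \ C).Nonempty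

section Aux
open Set Metric

variable {α : Type*} [TopologicalSpace α]

lemma clopen_sep [T2Space α] [CompactSpace α] (x : α) {F : Set α} (hF : IsClosed F)
    (h : Disjoint (connectedComponent x) F) :
    ∃ Z : Set α, IsClopen Z ∧ x ∈ Z ∧ Disjoint Z F := by
  have key : ∀ y ∈ F, ∃ Z : Set α, IsClopen Z ∧ x ∈ Z ∧ y ∉ Z := by
    intro y hy
    have hy' : y ∉ connectedComponent x := fun hc => h.ne_of_mem hc hy rfl
    rw [connectedComponent_eq_iInter_isClopen, mem_iInter] at hy'
    push_neg at hy'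
    obtain ⟨⟨Z, hZ, hxZ⟩, hyZ⟩ := hy'
    exact ⟨Z, hZ, hxZ, hyZ⟩
  choose Z hZclopen hxZ hyZ using key
  have hcover : F ⊆ ⋃ y : F, (Z y y.2)ᶜ := fun y hy => mem_iUnion.2 ⟨⟨y, hy⟩, hyZ y hy⟩
  obtain ⟨t, ht⟩ := hF.isCompact.elim_finite_subcover (fun y : F => (Z y y.2)ᶜ)
    (fun y => (hZclopen y y.2).1.isOpen_compl) hcover
  refine ⟨⋂ y ∈ t, Z y y.2, isClopen_biInter_finset (fun y _ => hZclopen y y.2),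
    mem_iInter₂.2 fun y _ => hxZ y y.2, ?_⟩
  rw [disjoint_left]
  intro a ha haF
  obtain ⟨y, hyt, hya⟩ := mem_iUnion₂.1 (ht haF)
  exact hya (mem_iInter₂.1 ha y hyt)

/-- Boundary bumping. -/
lemma bump [T2Space α] [CompactSpace α] [ConnectedSpace α] {E : Set α} (hE : IsClosed E)
    (hEne : E ≠ univ) {p : α} (hp : p ∈ E) :
    (connectedComponentIn E p ∩ frontier E).Nonempty := by
  by_contra hcon
  rw [not_nonempty_iff_eq_empty] at hcon
  haveI : CompactSpace E := isCompact_iff_compactSpace.mp hE.isCompact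
  set x : E := ⟨p, hp⟩
  have himg : connectedComponentIn E p = (↑) '' connectedComponent x :=
    connectedComponentIn_eq_image hp
  have hdisj : Disjoint (connectedComponent x) (((↑) : E → α) ⁻¹' frontier E) := by
    rw [disjoint_left]
    intro a ha haF
    have : (a : α) ∈ connectedComponentIn E p ∩ frontier E :=
      ⟨himg ▸ mem_image_of_mem _ ha, haF⟩
    simp [hcon] at this
  obtain ⟨Z, hZclopen, hxZ, hZdisj⟩ :=
    clopen_sep x (isClosed_frontier.preimage continuous_subtype_val) hdisj
  set W : Set α := (↑) '' Z with hW
  have hWsub : W ⊆ E := by rintro _ ⟨a, _, rfl⟩; exact a.2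
  have hWfr : ∀ a ∈ W, a ∉ frontier E := by
    rintro _ ⟨b, hbZ, rfl⟩ hbF
    exact hZdisj.ne_of_mem hbZ hbF rfl
  have hWint : W ⊆ interior E := by
    intro a ha
    have haE := hWsub ha
    by_contra hnot
    exact hWfr a ha (hE.frontier_eq ▸ ⟨haE, hnot⟩)
  have hWclosed : IsClosed W := ((hZclopen.1.isCompact).image continuous_subtype_val).isClosed
  have hWopen : IsOpen W := by
    obtain ⟨V, hV, hZV⟩ := hZclopen.2
    have : W = V ∩ interior E := by
      apply Subset.antisymm
      · rintro _ ⟨b, hbZ, rfl⟩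
        exact ⟨by rw [← hZV] at hbZ; exact hbZ, hWint ⟨b, hbZ, rfl⟩⟩
      · rintro a ⟨haV, haI⟩
        refine ⟨⟨a, interior_subset haI⟩, ?_, rfl⟩
        rw [← hZV]; exact haV
    rw [this]
    exact hV.inter isOpen_interior
  rcases isClopen_iff.mp ⟨hWclosed, hWopen⟩ with h0 | huniv
  · exact absurd (h0 ▸ ⟨x, hxZ, rfl⟩ : p ∈ (∅ : Set α)) (notMem_empty p)
  · exact hEne (univ_subset_iff.mp (huniv ▸ hWsub))

lemma isCompact_ccIn [T2Space α] [CompactSpace α] {E : Set α} (hE : IsClosed E) (p : α) :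
    IsCompact (connectedComponentIn E p) := by
  by_cases hp : p ∈ E
  · haveI : CompactSpace E := isCompact_iff_compactSpace.mp hE.isCompact
    rw [connectedComponentIn_eq_image hp]
    exact (isClosed_connectedComponent.isCompact).image continuous_subtype_val
  · rw [connectedComponentIn_eq_empty hp]; exact isCompact_empty

/-- The key connectedness lemma: if `Q` is open, `Qᶜ = K ∪ P` with `K` preconnected nonempty
and `P` open, then `K ∪ P` is preconnected. -/
lemma conn_union [PreconnectedSpace α] {K P Q : Set α} (hK : IsPreconnected K)
    (hKne : K.Nonempty) (hP : IsOpen P) (hQ : IsOpen Q) (hcomp : Qᶜ = K ∪ P) :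
    IsPreconnected (K ∪ P) := by
  set s := K ∪ P with hs
  have key : ∀ u v : Set α, IsOpen u → IsOpen v → s ⊆ u ∪ v → s ∩ (u ∩ v) = ∅ →
      K ⊆ u → (s ∩ v).Nonempty → False := by
    rintro u v hu hv hsuv hemp hKu ⟨b, hbs, hbv⟩
    have hKv : K ∩ v = ∅ := by
      apply eq_empty_of_subset_empty; rw [← hemp]
      exact fun a ⟨haK, hav⟩ => ⟨Or.inl haK, hKu haK, hav⟩
    have hWP : s ∩ v = P ∩ v := by
      rw [hs, union_inter_distrib_right, hKv, empty_union]
    have hWopen : IsOpen (s ∩ v) := hWP ▸ hP.inter hv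
    have hWcomplement : (s ∩ v)ᶜ = Q ∪ u := by
      ext a
      simp only [mem_compl_iff, mem_inter_iff, not_and, mem_union]
      constructor
      · intro h
        by_cases haQ : a ∈ Q
        · exact Or.inl haQ
        · have has : a ∈ s := hcomp ▸ (haQ : a ∈ Qᶜ)
          rcases hsuv has with hau | hav
          · exact Or.inr hau
          · exact absurd hav (h has)
      · rintro (haQ | hau) has hav
        · exact (hcomp ▸ (has : a ∈ s) : a ∈ Qᶜ) haQ
        · exact (eq_empty_iff_forall_notMem.mp hemp a) ⟨has, hau, hav⟩
    have hWclosed : IsClosed (s ∩ v) := by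
      rw [← isOpen_compl_iff, hWcomplement]
      exact hQ.union hu
    rcases isClopen_iff.mp ⟨hWclosed, hWopen⟩ with h0 | huniv
    · exact (eq_empty_iff_forall_notMem.mp h0 b) ⟨hbs, hbv⟩
    · obtain ⟨k, hk⟩ := hKne
      have : k ∈ s ∩ v := huniv ▸ mem_univ k
      exact (eq_empty_iff_forall_notMem.mp hKv k) ⟨hk, this.2⟩
  intro u v hu hv hsuv hsu hsv
  by_contra hne
  rw [not_nonempty_iff_eq_empty] at hne
  have hKuv : K ⊆ u ∨ K ⊆ v := by
    by_contra hcon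
    push_neg at hcon
    obtain ⟨hnu, hnv⟩ := hcon
    have hKu : (K ∩ u).Nonempty := by
      rcases not_subset.mp hnv with ⟨a, haK, hav⟩
      rcases hsuv (Or.inl haK) with h | h
      exacts [⟨a, haK, h⟩, absurd h hav]
    have hKv : (K ∩ v).Nonempty := by
      rcases not_subset.mp hnu with ⟨a, haK, hau⟩
      rcases hsuv (Or.inl haK) with h | h
      exacts [absurd h hau, ⟨a, haK, h⟩]
    obtain ⟨a, ha⟩ := hK u v hu hv (fun a haK => hsuv (Or.inl haK)) hKu hKv
    exact (eq_empty_iff_forall_notMem.mp hne a) ⟨Or.inl ha.1, ha.2⟩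
  rcases hKuv with hKu | hKv
  · exact key u v hu hv hsuv hne hKu hsv
  · exact key v u hv hu (by rwa [union_comm]) (by rwa [inter_comm v u]) hKv hsu

/-- A continuum containing a proper subcontinuum with nonempty interior is decomposable. -/
lemma decomp_of_interior [T2Space α] [CompactSpace α] [ConnectedSpace α] {K : Set α}
    (hKc : IsCompact K) (hKconn : IsConnected K) (hKne : K ≠ univ)
    (hKi : (interior K).Nonempty) :
    ∃ A B : Set α, IsCompact A ∧ IsConnected A ∧ IsCompact B ∧ IsConnected B ∧
      A ≠ univ ∧ B ≠ univ ∧ A ∪ B = univ := by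
  have hKclosed : IsClosed K := hKc.isClosed
  have hKcne : Kᶜ.Nonempty := nonempty_compl.mpr hKne
  by_cases hpre : IsPreconnected Kᶜ
  · refine ⟨K, closure Kᶜ, hKc, hKconn, isClosed_closure.isCompact,
      ⟨hKcne.mono subset_closure, hpre.closure⟩, hKne, ?_, ?_⟩
    · rw [closure_compl]
      intro h
      rw [compl_univ_iff] at h
      exact hKi.ne_empty h
    · rw [closure_compl]
      apply eq_univ_of_univ_subset
      intro a _
      by_cases haK : a ∈ K
      · exact Or.inl haK
      · exact Or.inr fun hi => haK (interior_subset hi)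
  · rw [IsPreconnected] at hpre
    push_neg at hpre
    obtain ⟨u, v, hu, hv, hsub, hne_u, hne_v, hemp'⟩ := hpre
    have hemp : Kᶜ ∩ (u ∩ v) = ∅ := hemp'
    set P := Kᶜ ∩ u with hPdef
    set Q := Kᶜ ∩ v with hQdef
    have hPopen : IsOpen P := hKclosed.isOpen_compl.inter hu
    have hQopen : IsOpen Q := hKclosed.isOpen_compl.inter hv
    have hQc : Qᶜ = K ∪ P := by
      ext a
      simp only [hQdef, mem_compl_iff, mem_inter_iff, not_and, mem_union, hPdef]
      constructor
      · intro h
        by_cases haK : a ∈ K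
        · exact Or.inl haK
        · rcases hsub haK with hau | hav
          · exact Or.inr ⟨haK, hau⟩
          · exact absurd hav (h haK)
      · rintro (haK | ⟨haKc, hau⟩) haKc' hav
        · exact haKc' haK
        · exact (eq_empty_iff_forall_notMem.mp hemp a) ⟨haKc, hau, hav⟩
    have hPc : Pᶜ = K ∪ Q := by
      ext a
      simp only [hPdef, mem_compl_iff, mem_inter_iff, not_and, mem_union, hQdef]
      constructor
      · intro h
        by_cases haK : a ∈ K
        · exact Or.inl haK
        · rcases hsub haK with hau | hav
          · exact absurd hau (h haK)
          · exact Or.inr ⟨haK, hav⟩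
      · rintro (haK | ⟨haKc, hav⟩) haKc' hau
        · exact haKc' haK
        · exact (eq_empty_iff_forall_notMem.mp hemp a) ⟨haKc, hau, hav⟩
    refine ⟨K ∪ P, K ∪ Q, ?_, ?_, ?_, ?_, ?_, ?_, ?_⟩
    · rw [← hQc]; exact (hQopen.isClosed_compl).isCompact
    · exact ⟨hKconn.1.mono subset_union_left,
        conn_union hKconn.2 hKconn.1 hPopen hQopen hQc⟩
    · rw [← hPc]; exact (hPopen.isClosed_compl).isCompact
    · exact ⟨hKconn.1.mono subset_union_left,
        conn_union hKconn.2 hKconn.1 hQopen hPopen hPc⟩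
    · rw [← hQc]
      intro h
      rw [compl_univ_iff] at h
      exact hne_v.ne_empty h
    · rw [← hPc]
      intro h
      rw [compl_univ_iff] at h
      exact hne_u.ne_empty h
    · apply eq_univ_of_univ_subset
      intro a _
      by_cases haK : a ∈ K
      · exact Or.inl (Or.inl haK)
      · rcases hsub haK with hau | hav
        · exact Or.inl (Or.inr ⟨haK, hau⟩)
        · exact Or.inr (Or.inr ⟨haK, hav⟩)

end Aux

open Set Metric in
/-- Every nondegenerate D-continuum is decomposable: it is the union of two proper
subcontinua. -/
theorem d_continuum_decomposable (X : Type*) [MetricSpace X] [CompactSpace X]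
    [ConnectedSpace X] [Nontrivial X] (hX : DSpace X) :
    ∃ A B : Set X, IsCompact A ∧ IsConnected A ∧ IsCompact B ∧ IsConnected B ∧
      A ≠ Set.univ ∧ B ≠ Set.univ ∧ A ∪ B = Set.univ := by
  by_contra h
  -- every proper subcontinuum has empty interior
  have eint : ∀ K : Set X, IsCompact K → IsConnected K → K ≠ univ → interior K = ∅ := by
    intro K hc hconn hne
    by_contra hi
    exact h (decomp_of_interior hc hconn hne (nonempty_iff_ne_empty.mpr hi))
  -- components of closed balls are nondegenerate proper subcontinua
  have ballcomp : ∀ (p : X) (r : ℝ), 0 < r → closedBall p r ≠ univ →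
      IsCompact (connectedComponentIn (closedBall p r) p) ∧
      IsConnected (connectedComponentIn (closedBall p r) p) ∧
      (connectedComponentIn (closedBall p r) p).Nontrivial ∧
      connectedComponentIn (closedBall p r) p ≠ univ ∧
      connectedComponentIn (closedBall p r) p ⊆ closedBall p r ∧
      p ∈ connectedComponentIn (closedBall p r) p := by
    intro p r hr hne
    have hp : p ∈ closedBall p r := mem_closedBall_self hr.le
    have hsub := connectedComponentIn_subset (closedBall p r) p
    obtain ⟨x, hxA, hxfr⟩ := bump isClosed_closedBall hne hp
    have hxp : x ≠ p := by
      have hd : dist x p = r := frontier_closedBall_subset_sphere hxfr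
      intro he
      rw [he, dist_self] at hd
      exact hr.ne hd
    exact ⟨isCompact_ccIn isClosed_closedBall p, isConnected_connectedComponentIn_iff.mpr hp,
      ⟨x, hxA, p, mem_connectedComponentIn hp, hxp⟩,
      fun hu => hne (univ_subset_iff.mp (hu ▸ hsub)), hsub, mem_connectedComponentIn hp⟩
  obtain ⟨p⟩ : Nonempty X := inferInstance
  -- there is a point outside the composant of p
  have hcomp_ne : ∃ z : X, ∀ K : Set X, IsCompact K → IsConnected K → K ≠ univ →
      p ∈ K → z ∉ K := by
    by_contra hcon
    push_neg at hcon
    obtain ⟨D, hDc, hDd⟩ := TopologicalSpace.exists_countable_dense X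
    haveI := hDc.to_subtype
    set f : D × ℕ → Set X :=
      fun qn => connectedComponentIn (ball (qn.1 : X) (1 / (qn.2 + 1)))ᶜ p with hf
    have hfclosed : ∀ i, IsClosed (f i) :=
      fun i => (isCompact_ccIn (isOpen_ball.isClosed_compl) p).isClosed
    have hfint : ∀ i, interior (f i) = ∅ := by
      rintro ⟨q, n⟩
      by_cases hpE : p ∈ (ball (q : X) (1 / (n + 1)))ᶜ
      · apply eint _ (isCompact_ccIn (isOpen_ball.isClosed_compl) p)
          (isConnected_connectedComponentIn_iff.mpr hpE)
        intro hu
        have hq : (q : X) ∈ (ball (q : X) (1 / (n + 1)))ᶜ :=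
          (connectedComponentIn_subset _ _) (hu ▸ mem_univ (q : X))
        exact hq (mem_ball_self (by positivity))
      · rw [hf]
        simp only
        rw [connectedComponentIn_eq_empty hpE, interior_empty]
    have hcover : ⋃ i, f i = univ := by
      apply eq_univ_of_univ_subset
      intro x _
      obtain ⟨K, hKc, hKconn, hKne, hpK, hxK⟩ := hcon x
      obtain ⟨y, hy⟩ := nonempty_compl.mpr hKne
      obtain ⟨ε, hε, hball⟩ := Metric.isOpen_iff.mp hKc.isClosed.isOpen_compl y hy
      obtain ⟨q, hqD, hqy⟩ := Metric.mem_closure_iff.mp (hDd y) (ε / 2) (by linarith)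
      obtain ⟨n, hn⟩ := exists_nat_one_div_lt (show (0:ℝ) < ε / 2 by linarith)
      have hKE : K ⊆ (ball q (1 / (n + 1)))ᶜ := by
        intro w hw hwb
        rw [mem_ball] at hwb
        have h1 : dist w y ≤ dist w q + dist q y := dist_triangle w q y
        have h2 : dist q y < ε / 2 := by rw [dist_comm]; exact hqy
        have : w ∈ ball y ε := by rw [mem_ball]; linarith
        exact (hball this) hw
      exact mem_iUnion.2 ⟨⟨⟨q, hqD⟩, n⟩,
        (hKconn.2.subset_connectedComponentIn hpK hKE) hxK⟩
    obtain ⟨i, hi⟩ := nonempty_interior_of_iUnion_of_closed hfclosed hcover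
    rw [hfint i] at hi
    exact hi.ne_empty rfl
  obtain ⟨z, hz⟩ := hcomp_ne
  have hzp : z ≠ p := by
    intro he
    obtain ⟨y, hy⟩ := exists_ne p
    refine hz {p} isCompact_singleton isConnected_singleton ?_ rfl (he ▸ rfl)
    intro hu
    exact hy (hu ▸ mem_univ y : y ∈ ({p} : Set X))
  have hdist : 0 < dist p z := dist_pos.mpr (fun he => hzp he.symm)
  set r := dist p z / 3 with hrdef
  have hr : 0 < r := by positivity
  have hBp : closedBall p r ≠ univ := by
    intro hu
    have : z ∈ closedBall p r := hu ▸ mem_univ z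
    rw [mem_closedBall, dist_comm] at this
    rw [hrdef] at this; linarith
  have hBz : closedBall z r ≠ univ := by
    intro hu
    have : p ∈ closedBall z r := hu ▸ mem_univ p
    rw [mem_closedBall] at this
    rw [hrdef] at this; linarith
  obtain ⟨hAc, hAconn, hAnt, hAne, hAsub, hpA⟩ := ballcomp p r hr hBp
  obtain ⟨hBc, hBconn, hBnt, hBne, hBsub, hzB⟩ := ballcomp z r hr hBz
  set A := connectedComponentIn (closedBall p r) p
  set B := connectedComponentIn (closedBall z r) z
  have hdisjAB : Disjoint A B := by
    rw [disjoint_left]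
    intro a haA haB
    have h1 : dist a p ≤ r := mem_closedBall.mp (hAsub haA)
    have h2 : dist a z ≤ r := mem_closedBall.mp (hBsub haB)
    have h3 : dist p z ≤ dist p a + dist a z := dist_triangle p a z
    rw [dist_comm p a] at h3
    rw [hrdef] at h1 h2; linarith
  obtain ⟨C, hCc, hCconn, ⟨a, haA, haC⟩, ⟨b, hbB, hbC⟩, ⟨w, hwAB, hwC⟩⟩ :=
    hX A B hAc hAconn hAnt hBc hBconn hBnt hdisjAB
  have hCne : C ≠ univ := fun hu => hwC (hu ▸ mem_univ w)
  have hACconn : IsConnected (A ∪ C) := IsConnected.union ⟨a, haA, haC⟩ hAconn hCconn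
  have hBCconn : IsConnected (B ∪ C) := IsConnected.union ⟨b, hbB, hbC⟩ hBconn hCconn
  have hTconn : IsConnected ((A ∪ C) ∪ B) :=
    IsConnected.union ⟨b, Or.inr hbC, hbB⟩ hACconn hBconn
  have hTc : IsCompact ((A ∪ C) ∪ B) := (hAc.union hCc).union hBc
  have hTuniv : (A ∪ C) ∪ B = univ := by
    by_contra hne
    exact hz _ hTc hTconn hne (Or.inl (Or.inl hpA)) (Or.inr hzB)
  have hACuniv : A ∪ C = univ := by
    by_contra hne
    exact h ⟨A ∪ C, B, hAc.union hCc, hACconn, hBc, hBconn, hne, hBne, hTuniv⟩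
  have hBCuniv : B ∪ C = univ := by
    by_contra hne
    refine h ⟨B ∪ C, A, hBc.union hCc, hBCconn, hAc, hAconn, hne, hAne, ?_⟩
    rw [union_comm (B ∪ C) A, union_comm B C, ← union_assoc]
    exact hTuniv
  apply hCne
  apply eq_univ_of_univ_subset
  intro x _
  have hx1 : x ∈ A ∪ C := hACuniv ▸ mem_univ x
  have hx2 : x ∈ B ∪ C := hBCuniv ▸ mem_univ x
  rcases hx1 with hA | hC
  · rcases hx2 with hB | hC
    · exact absurd hB (disjoint_left.mp hdisjAB hA)
    · exact hC
  · exact hC
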